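/- Let q be a prime power, K a finite field with q² elements, and a, b, c, d ∈ K with d ≠ 0, d^q·b = a·c^q, d^q·c ≠ a·b^q, and d^{q+1} ≠ a^{q+1}. Then the greatest common divisor H of N(X) = d^q·X³ + c^q·X² + b^q·X + a^q and D(X) = a·X³ + b·X² + c·X + d in K[X] has degree 1 if and only if (d^{q+1} − a^{q+1})^{q+1} = (d^q·c − a·b^q)·(d·c^q − a^q·b). -/

import Mathlib

open Polynomial

open scoped Classical

/-- The denominator polynomial `D(X) = a·X³ + b·X² + c·X + d`. -/
noncomputable def Dpoly {K : Type*} [Field K] (a b c d : K) : K[X] :=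
  C a * X ^ 3 + C b * X ^ 2 + C c * X + C d

/-- The numerator polynomial `N(X) = d^q·X³ + c^q·X² + b^q·X + a^q`. -/
noncomputable def Npoly {K : Type*} [Field K] (q : ℕ) (a b c d : K) : K[X] :=
  C (d ^ q) * X ^ 3 + C (c ^ q) * X ^ 2 + C (b ^ q) * X + C (a ^ q)

/-- Numerator of `g = N/D` in lowest terms. -/
noncomputable def numer₀ {K : Type*} [Field K] (q : ℕ) (a b c d : K) : K[X] :=
  Npoly q a b c d / EuclideanDomain.gcd (Npoly q a b c d) (Dpoly a b c d)

/-- Denominator of `g = N/D` in lowest terms. -/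
noncomputable def denom₀ {K : Type*} [Field K] (q : ℕ) (a b c d : K) : K[X] :=
  Dpoly a b c d / EuclideanDomain.gcd (Npoly q a b c d) (Dpoly a b c d)

/-- The degree of the rational function `g = N/D`. -/
noncomputable def gDeg {K : Type*} [Field K] (q : ℕ) (a b c d : K) : ℕ :=
  max (numer₀ q a b c d).natDegree (denom₀ q a b c d).natDegree

/-- `μ_{q+1} = {x ∈ K : x^{q+1} = 1}`. -/
def mu (q : ℕ) (K : Type*) [Monoid K] : Set K := {x : K | x ^ (q + 1) = 1}

/-- `g` permutes `μ_{q+1}`: the map `x ↦ N₀(x)·D₀(x)⁻¹` is a bijection of `μ_{q+1}`. -/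
def gPermutes (q : ℕ) {K : Type*} [Field K] (a b c d : K) : Prop :=
  Set.BijOn (fun x => (numer₀ q a b c d).eval x * ((denom₀ q a b c d).eval x)⁻¹)
    (mu q K) (mu q K)

/-- Lemma 8 of the paper: when `d ≠ 0`, `d^q·b = a·c^q`,
`d^q·c ≠ a·b^q` and `d^{q+1} ≠ a^{q+1}`, the gcd of `N` and `D` has degree 1 iff
`(d^{q+1} − a^{q+1})^{q+1} = (d^q·c − a·b^q)·(d·c^q − a^q·b)`. -/
theorem stmt11 {K : Type*} [Field K] [Fintype K] (p m q : ℕ) (hp : p.Prime)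
    (hm : 1 ≤ m) (hq : q = p ^ m) (hK : Fintype.card K = q ^ 2) (a b c d : K)
    (hd : d ≠ 0) (h1 : d ^ q * b = a * c ^ q) (h2 : d ^ q * c ≠ a * b ^ q)
    (h3 : d ^ (q + 1) ≠ a ^ (q + 1)) :
    (EuclideanDomain.gcd (Npoly q a b c d) (Dpoly a b c d)).natDegree = 1 ↔
      (d ^ (q + 1) - a ^ (q + 1)) ^ (q + 1) =
        (d ^ q * c - a * b ^ q) * (d * c ^ q - a ^ q * b) := by

  -- basic setup: characteristic and Frobenius facts
  haveI hpF : Fact p.Prime := ⟨hp⟩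
  have hcharP : CharP K p := by
    obtain ⟨n, hrp, hcard'⟩ := FiniteField.card K (ringChar K)
    have hdvd : ringChar K ∣ p ^ (m * 2) := by
      have : (ringChar K) ^ (n : ℕ) = p ^ (m * 2) := by
        rw [← hcard', hK, hq, ← pow_mul]
      rw [← this]
      exact dvd_pow_self _ n.pos.ne'
    have hrpp : ringChar K = p := (Nat.prime_dvd_prime_iff_eq hrp hp).mp (hrp.dvd_of_dvd_pow hdvd)
    exact hrpp ▸ ringChar.charP K
  have hfrob : ∀ x y : K, (x - y) ^ q = x ^ q - y ^ q := by
    intro x y; rw [hq]; exact sub_pow_char_pow x y m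
  have hcardpow : ∀ x : K, x ^ q ^ 2 = x := by
    intro x; rw [← hK]; exact FiniteField.pow_card x
  have hqq : ∀ x : K, (x ^ q) ^ q = x := by
    intro x; rw [← pow_mul, show q * q = q ^ 2 by ring, hcardpow]
  have hone : ∀ x : K, (x ^ (q + 1)) ^ q = x ^ (q + 1) := by
    intro x
    rw [← pow_mul, show (q + 1) * q = q ^ 2 + q by ring, pow_add, hcardpow, pow_succ]
    exact mul_comm x (x ^ q)
  have h1q : d * b ^ q = a ^ q * c := by
    have h := congrArg (· ^ q) h1
    simpa [mul_pow, hqq] using h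
  have hα : (d ^ q * c - a * b ^ q) ≠ 0 := sub_ne_zero.mpr h2
  have hβ : (d ^ (q + 1) - a ^ (q + 1)) ≠ 0 := sub_ne_zero.mpr h3
  have hβq : (d ^ (q + 1) - a ^ (q + 1)) ^ q = d ^ (q + 1) - a ^ (q + 1) := by
    rw [hfrob, hone, hone]
  -- key polynomial identity
  have keyR : C (d ^ q) * Dpoly a b c d - C a * Npoly q a b c d
      = C (d ^ q * c - a * b ^ q) * X + C (d ^ (q + 1) - a ^ (q + 1)) := by
    have e : C (d ^ q) * Dpoly a b c d - C a * Npoly q a b c d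
        = C (d ^ q * b - a * c ^ q) * X ^ 2 + (C (d ^ q * c - a * b ^ q) * X
          + C (d ^ (q + 1) - a ^ (q + 1))) := by
      simp only [Dpoly, Npoly, map_sub, map_mul, map_pow]
      ring
    rw [e, h1, sub_self, map_zero, zero_mul, zero_add]
  have hRpdeg : (C (d ^ q * c - a * b ^ q) * X + C (d ^ (q + 1) - a ^ (q + 1))).natDegree = 1 :=
    natDegree_linear hα
  have hRpne : (C (d ^ q * c - a * b ^ q) * X + C (d ^ (q + 1) - a ^ (q + 1))) ≠ 0 := by
    intro h; rw [h] at hRpdeg; simp at hRpdeg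
  have hgdvdR : EuclideanDomain.gcd (Npoly q a b c d) (Dpoly a b c d)
      ∣ C (d ^ q * c - a * b ^ q) * X + C (d ^ (q + 1) - a ^ (q + 1)) := by
    rw [← keyR]
    exact dvd_sub (Dvd.dvd.mul_left (EuclideanDomain.gcd_dvd_right _ _) _)
      (Dvd.dvd.mul_left (EuclideanDomain.gcd_dvd_left _ _) _)
  have hDne : Dpoly a b c d ≠ 0 := by
    intro h
    apply hd
    have := congrArg (eval 0) h
    simpa [Dpoly] using this
  have hgne : EuclideanDomain.gcd (Npoly q a b c d) (Dpoly a b c d) ≠ 0 := by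
    intro h; exact hDne (EuclideanDomain.gcd_eq_zero_iff.mp h).2
  rw [show (d ^ (q + 1) - a ^ (q + 1)) ^ (q + 1)
      = (d ^ (q + 1) - a ^ (q + 1)) * (d ^ (q + 1) - a ^ (q + 1)) by rw [pow_succ, hβq]]
  constructor
  · intro hdeg
    have hg1 : (EuclideanDomain.gcd (Npoly q a b c d) (Dpoly a b c d)).coeff 1 ≠ 0 := by
      have hcl : (EuclideanDomain.gcd (Npoly q a b c d) (Dpoly a b c d)).coeff 1
          = (EuclideanDomain.gcd (Npoly q a b c d) (Dpoly a b c d)).leadingCoeff := by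
        rw [leadingCoeff, hdeg]
      rw [hcl]
      exact leadingCoeff_ne_zero.mpr hgne
    set g := EuclideanDomain.gcd (Npoly q a b c d) (Dpoly a b c d) with hgdef
    obtain ⟨x₀, hx₀⟩ : ∃ x : K, x = -g.coeff 0 / g.coeff 1 := ⟨_, rfl⟩
    have hgeval : eval x₀ g = 0 := by
      conv_lhs => rw [eq_X_add_C_of_natDegree_le_one hdeg.le]
      simp only [eval_add, eval_mul, eval_C, eval_X, hx₀]
      field_simp
      ring
    have hDx : eval x₀ (Dpoly a b c d) = 0 :=
      eval_eq_zero_of_dvd_of_eval_eq_zero (EuclideanDomain.gcd_dvd_right _ _) hgeval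
    have hNx : eval x₀ (Npoly q a b c d) = 0 :=
      eval_eq_zero_of_dvd_of_eval_eq_zero (EuclideanDomain.gcd_dvd_left _ _) hgeval
    simp only [Dpoly, Npoly, eval_add, eval_mul, eval_pow, eval_C, eval_X] at hDx hNx
    have E1 : (d ^ q * c - a * b ^ q) * x₀ + (d ^ (q + 1) - a ^ (q + 1)) = 0 := by
      linear_combination d ^ q * hDx - a * hNx - x₀ ^ 2 * h1
    have hx0ne : x₀ ≠ 0 := by
      intro h
      apply hd
      rw [h] at hDx
      simpa using hDx
    have E2 : (d ^ (q + 1) - a ^ (q + 1)) * x₀ + (d * c ^ q - a ^ q * b) = 0 := by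
      have E2' : x₀ ^ 2 * ((d ^ (q + 1) - a ^ (q + 1)) * x₀ + (d * c ^ q - a ^ q * b)) = 0 := by
        linear_combination d * hNx - a ^ q * hDx - x₀ * h1q
      rcases mul_eq_zero.mp E2' with h | h
      · exact absurd ((pow_eq_zero_iff (two_ne_zero)).mp h) hx0ne
      · exact h
    linear_combination (d ^ (q + 1) - a ^ (q + 1)) * E1 - (d ^ q * c - a * b ^ q) * E2
  · intro heq
    obtain ⟨x₀, hx₀⟩ : ∃ x : K,
        x = -(d ^ (q + 1) - a ^ (q + 1)) / (d ^ q * c - a * b ^ q) := ⟨_, rfl⟩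
    have E1 : (d ^ q * c - a * b ^ q) * x₀ + (d ^ (q + 1) - a ^ (q + 1)) = 0 := by
      rw [hx₀]; field_simp; ring
    have E2 : (d ^ (q + 1) - a ^ (q + 1)) * x₀ + (d * c ^ q - a ^ q * b) = 0 := by
      have h' : (d ^ q * c - a * b ^ q)
          * ((d ^ (q + 1) - a ^ (q + 1)) * x₀ + (d * c ^ q - a ^ q * b)) = 0 := by
        linear_combination (d ^ (q + 1) - a ^ (q + 1)) * E1 - heq
      exact (mul_eq_zero.mp h').resolve_left hα
    have hDx : eval x₀ (Dpoly a b c d) = 0 := by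
      have h' : (d ^ (q + 1) - a ^ (q + 1)) * eval x₀ (Dpoly a b c d) = 0 := by
        simp only [Dpoly, eval_add, eval_mul, eval_pow, eval_C, eval_X]
        linear_combination d * E1 + a * x₀ ^ 2 * E2 + x₀ ^ 2 * d * h1 + x₀ * a * h1q
      exact (mul_eq_zero.mp h').resolve_left hβ
    have hNx : eval x₀ (Npoly q a b c d) = 0 := by
      have h' : (d ^ (q + 1) - a ^ (q + 1)) * eval x₀ (Npoly q a b c d) = 0 := by
        simp only [Npoly, eval_add, eval_mul, eval_pow, eval_C, eval_X]
        linear_combination d ^ q * x₀ ^ 2 * E2 + a ^ q * E1 + x₀ ^ 2 * a ^ q * h1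
          + x₀ * d ^ q * h1q
      exact (mul_eq_zero.mp h').resolve_left hβ
    have hroot : (X - C x₀) ∣ EuclideanDomain.gcd (Npoly q a b c d) (Dpoly a b c d) :=
      EuclideanDomain.dvd_gcd (dvd_iff_isRoot.mpr hNx) (dvd_iff_isRoot.mpr hDx)
    have h1le : 1 ≤ (EuclideanDomain.gcd (Npoly q a b c d) (Dpoly a b c d)).natDegree := by
      have := natDegree_le_of_dvd hroot hgne
      simpa using this
    have hle1 : (EuclideanDomain.gcd (Npoly q a b c d) (Dpoly a b c d)).natDegree ≤ 1 := by
      have := natDegree_le_of_dvd hgdvdR hRpne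
      rwa [hRpdeg] at this
    omega
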